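/- Let B, C, D be three non-collinear points of the Euclidean plane ℝ², let O be the circumcenter and r the circumradius of triangle BCD. Let A be a point, distinct from B and from C, such that A and D lie strictly on opposite sides of the line through B and C. Then dist(A, O) < r (A is strictly inside the circumcircle of BCD) if and only if ‖B − D‖·‖C − D‖·⟨B − A, C − A⟩ + ‖B − A‖·‖C − A‖·⟨B − D, C − D⟩ < 0, where ⟨·,·⟩ is the Euclidean inner product and ‖·‖ the Euclidean norm. -/

import Mathlib

open Real EuclideanGeometry RealInnerProductSpace

private lemma key_ineq (X Y P S c1 c2 Pw : ℝ) (hP : 0 < P) (hS : 0 < S)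
    (hP2 : P^2 = X^2 + c1^2) (hS2 : S^2 = Y^2 + c2^2)
    (hc : c1 * c2 < 0) (hid : c2 * Pw = X * c2 - c1 * Y) :
    Pw < 0 ↔ S * X + P * Y < 0 := by
  have hc1 : c1 ≠ 0 := by rintro rfl; simp at hc
  have hc2 : c2 ≠ 0 := by rintro rfl; simp at hc
  have hc1sq : 0 < c1^2 := by positivity
  have hc2sq : 0 < c2^2 := by positivity
  have hkey : (c1*c2)*Pw = X*(c1*c2) - c1^2*Y := by linear_combination c1 * hid
  have h1 : Pw < 0 ↔ 0 < X*(c1*c2) - c1^2*Y := by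
    rw [← hkey]
    constructor
    · intro h; exact mul_pos_of_neg_of_neg hc h
    · intro h; by_contra h'; push_neg at h'
      have : (c1*c2)*Pw ≤ 0 := mul_nonpos_iff.mpr (Or.inr ⟨hc.le, h'⟩)
      linarith
  rw [h1]
  have h5 : P^2*Y^2 - S^2*X^2 = c1^2*Y^2 - c2^2*X^2 := by
    linear_combination Y^2 * hP2 - X^2 * hS2
  rcases le_or_gt 0 X with hX | hX <;> rcases le_or_gt 0 Y with hY | hY
  · constructor <;> intro h <;> exfalso
    · have h1 : X*(c1*c2) ≤ 0 := mul_nonpos_iff.mpr (Or.inl ⟨hX, hc.le⟩)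
      have h2 : 0 ≤ c1^2*Y := mul_nonneg (sq_nonneg c1) hY
      linarith
    · have h1 : 0 ≤ S*X := mul_nonneg hS.le hX
      have h2 : 0 ≤ P*Y := mul_nonneg hP.le hY
      linarith
  · -- X ≥ 0, Y < 0
    have ha : 0 < P * (-Y) := mul_pos hP (by linarith)
    have hb : 0 ≤ S * X := mul_nonneg hS.le hX
    have hv : 0 ≤ X * (-(c1*c2)) := mul_nonneg hX (by linarith)
    have hu : 0 < c1^2 * (-Y) := mul_pos hc1sq (by linarith)
    constructor
    · intro h
      have hsum : 0 < (-(c1^2*Y)) + X*(-(c1*c2)) := by linarith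
      have h2 : 0 < c1^2*(c1^2*Y^2 - c2^2*X^2) := by
        linarith [mul_pos h hsum]
      have h3 : 0 < c1^2*Y^2 - c2^2*X^2 := by
        by_contra hcon; push_neg at hcon
        have := mul_le_mul_of_nonneg_left hcon hc1sq.le
        rw [mul_zero] at this; linarith
      by_contra hcon; push_neg at hcon
      have hba : P*(-Y) ≤ S*X := by linarith
      have := mul_self_le_mul_self ha.le hba
      linarith
    · intro h
      have hab : S*X < P*(-Y) := by linarith
      have := mul_self_lt_mul_self hb hab
      have h3 : 0 < c1^2*Y^2 - c2^2*X^2 := by linarith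
      have h2 : 0 < c1^2*(c1^2*Y^2 - c2^2*X^2) := mul_pos hc1sq h3
      by_contra hcon; push_neg at hcon
      -- hcon : X*(c1*c2) - c1^2*Y ≤ 0, i.e. -(c1^2*Y) ≤ X*(-(c1*c2))
      have hba : -(c1^2*Y) ≤ X*(-(c1*c2)) := by linarith
      have h4 := mul_self_le_mul_self (by linarith : (0:ℝ) ≤ -(c1^2*Y)) hba
      linarith [h4]
  · -- X < 0, Y ≥ 0
    have ha : 0 < S * (-X) := mul_pos hS (by linarith)
    have hb : 0 ≤ P * Y := mul_nonneg hP.le hY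
    have hv : 0 ≤ c1^2 * Y := mul_nonneg hc1sq.le hY
    have hu : 0 < X * (c1*c2) := mul_pos_of_neg_of_neg hX hc
    constructor
    · intro h
      -- h : 0 < X*(c1*c2) - c1^2*Y
      have hsum : 0 < X*(c1*c2) + c1^2*Y := by linarith
      have h2 : 0 < c1^2*(c2^2*X^2 - c1^2*Y^2) := by
        linarith [mul_pos h hsum]
      have h3 : 0 < c2^2*X^2 - c1^2*Y^2 := by
        by_contra hcon; push_neg at hcon
        have := mul_le_mul_of_nonneg_left hcon hc1sq.le
        rw [mul_zero] at this; linarith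
      by_contra hcon; push_neg at hcon
      have hba : S*(-X) ≤ P*Y := by linarith
      have := mul_self_le_mul_self ha.le hba
      linarith
    · intro h
      have hab : P*Y < S*(-X) := by linarith
      have := mul_self_lt_mul_self hb hab
      have h3 : 0 < c2^2*X^2 - c1^2*Y^2 := by linarith
      have h2 : 0 < c1^2*(c2^2*X^2 - c1^2*Y^2) := mul_pos hc1sq h3
      by_contra hcon; push_neg at hcon
      have hba : X*(c1*c2) ≤ c1^2*Y := by linarith
      have h4 := mul_self_le_mul_self hu.le hba
      linarith [h4]
  · constructor <;> intro _
    · have h1 : S*X < 0 := mul_neg_of_pos_of_neg hS hX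
      have h2 : P*Y < 0 := mul_neg_of_pos_of_neg hP hY
      linarith
    · have h1 : 0 < X*(c1*c2) := mul_pos_of_neg_of_neg hX hc
      have h2 : c1^2*Y ≤ 0 := mul_nonpos_iff.mpr (Or.inl ⟨sq_nonneg c1, hY.le⟩)
      linarith

theorem inside_circumcircle_iff_division_free_test
    (A B C D O : EuclideanSpace ℝ (Fin 2)) (r : ℝ)
    (hncol : ¬ Collinear ℝ ({B, C, D} : Set (EuclideanSpace ℝ (Fin 2))))
    (hB : dist B O = r) (hC : dist C O = r) (hD : dist D O = r)
    (hAB : A ≠ B) (hAC : A ≠ C)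
    (hside : (affineSpan ℝ ({B, C} : Set (EuclideanSpace ℝ (Fin 2)))).SOppSide A D) :
    dist A O < r ↔
      ‖B - D‖ * ‖C - D‖ * ⟪B - A, C - A⟫ + ‖B - A‖ * ‖C - A‖ * ⟪B - D, C - D⟫ < 0 := by
  -- coordinate tools
  have hsub : ∀ (x y : EuclideanSpace ℝ (Fin 2)) (i : Fin 2), (x - y) i = x i - y i :=
    fun x y i => rfl
  have hinner : ∀ x y : EuclideanSpace ℝ (Fin 2), ⟪x, y⟫ = x 0 * y 0 + x 1 * y 1 := by
    intro x y
    simp [PiLp.inner_apply, RCLike.inner_apply, Fin.sum_univ_two, mul_comm]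
  have hnorm2 : ∀ x : EuclideanSpace ℝ (Fin 2), ‖x‖^2 = (x 0)^2 + (x 1)^2 := by
    intro x
    rw [EuclideanSpace.norm_eq, Real.sq_sqrt (by positivity)]
    simp [Fin.sum_univ_two, sq_abs]
  have hdist2 : ∀ x y : EuclideanSpace ℝ (Fin 2),
      dist x y ^ 2 = (x 0 - y 0)^2 + (x 1 - y 1)^2 := by
    intro x y
    rw [EuclideanSpace.dist_eq, Real.sq_sqrt (by positivity)]
    simp [Fin.sum_univ_two, Real.dist_eq, sq_abs]
  -- circle equations
  have hr0 : 0 ≤ r := hB ▸ dist_nonneg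
  have eB : (B 0 - O 0)^2 + (B 1 - O 1)^2 = r^2 := by rw [← hdist2, hB]
  have eC : (C 0 - O 0)^2 + (C 1 - O 1)^2 = r^2 := by rw [← hdist2, hC]
  have eD : (D 0 - O 0)^2 + (D 1 - O 1)^2 = r^2 := by rw [← hdist2, hD]
  -- distinctness from non-collinearity
  have hBD : B ≠ D := by
    rintro rfl
    refine hncol ((collinear_pair ℝ B C).subset ?_)
    intro x hx
    simp only [Set.mem_insert_iff, Set.mem_singleton_iff] at *
    tauto
  have hCD : C ≠ D := by
    rintro rfl
    refine hncol ((collinear_pair ℝ B C).subset ?_)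
    intro x hx
    simp only [Set.mem_insert_iff, Set.mem_singleton_iff] at *
    tauto
  -- cross products
  set c1 : ℝ := (B 0 - A 0)*(C 1 - A 1) - (B 1 - A 1)*(C 0 - A 0) with hc1def
  set c2 : ℝ := (B 0 - D 0)*(C 1 - D 1) - (B 1 - D 1)*(C 0 - D 0) with hc2def
  -- c2 ≠ 0 from non-collinearity
  have hc2ne : c2 ≠ 0 := by
    intro h0
    rw [hc2def] at h0
    apply hncol
    rw [collinear_iff_exists_forall_eq_smul_vadd]
    have hBDc : B 0 - D 0 ≠ 0 ∨ B 1 - D 1 ≠ 0 := by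
      by_contra hcon
      push_neg at hcon
      refine hBD ?_
      ext i; fin_cases i
      · show B 0 = D 0; linarith [hcon.1]
      · show B 1 = D 1; linarith [hcon.2]
    refine ⟨D, B - D, ?_⟩
    intro q hq
    simp only [Set.mem_insert_iff, Set.mem_singleton_iff] at hq
    rcases hq with rfl | rfl | rfl
    · refine ⟨1, ?_⟩
      ext i
      show q i = (((1:ℝ) • (q - D)) + D) i
      simp [hsub]
    · rcases hBDc with h | h
      · refine ⟨(q 0 - D 0)/(B 0 - D 0), ?_⟩
        ext i
        show q i = ((((q 0 - D 0)/(B 0 - D 0)) • (B - D)) + D) i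
        fin_cases i
        · show q 0 = (q 0 - D 0)/(B 0 - D 0) * ((B - D) 0) + D 0
          rw [hsub]; field_simp; ring
        · show q 1 = (q 0 - D 0)/(B 0 - D 0) * ((B - D) 1) + D 1
          rw [hsub]; field_simp; linear_combination h0
      · refine ⟨(q 1 - D 1)/(B 1 - D 1), ?_⟩
        ext i
        show q i = ((((q 1 - D 1)/(B 1 - D 1)) • (B - D)) + D) i
        fin_cases i
        · show q 0 = (q 1 - D 1)/(B 1 - D 1) * ((B - D) 0) + D 0
          rw [hsub]; field_simp; linear_combination -h0
        · show q 1 = (q 1 - D 1)/(B 1 - D 1) * ((B - D) 1) + D 1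
          rw [hsub]; field_simp; ring
    · refine ⟨0, ?_⟩
      ext i
      show q i = (((0:ℝ) • (B - q)) + q) i
      simp
  -- opposite sides gives c1 * c2 < 0
  have hcc : c1 * c2 < 0 := by
    obtain ⟨p, hpmem, hsbtw⟩ := hside.exists_sbtw
    obtain ⟨t, ht, hpt⟩ := hsbtw.mem_image_Ioo
    have hdir : p -ᵥ B ∈ (affineSpan ℝ ({B, C} : Set (EuclideanSpace ℝ (Fin 2)))).direction :=
      AffineSubspace.vsub_mem_direction hpmem (left_mem_affineSpan_pair ℝ B C)
    rw [direction_affineSpan] at hdir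
    obtain ⟨s, hs⟩ := mem_vectorSpan_pair_rev.mp hdir
    have hs0 : s * (C 0 - B 0) = p 0 - B 0 := by
      have := congrArg (fun v => v 0) hs
      simpa [hsub] using this
    have hs1 : s * (C 1 - B 1) = p 1 - B 1 := by
      have := congrArg (fun v => v 1) hs
      simpa [hsub] using this
    have hp0 : p 0 = t * (D 0 - A 0) + A 0 := by
      have := congrArg (fun v => v 0) hpt
      simp only [AffineMap.lineMap_apply, vsub_eq_sub, vadd_eq_add] at this
      simpa [hsub] using this.symm
    have hp1 : p 1 = t * (D 1 - A 1) + A 1 := by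
      have := congrArg (fun v => v 1) hpt
      simp only [AffineMap.lineMap_apply, vsub_eq_sub, vadd_eq_add] at this
      simpa [hsub] using this.symm
    -- (1-t) * c1 = - (t * c2)
    have hlin : (1 - t) * c1 = - (t * c2) := by
      rw [hc1def, hc2def]
      linear_combination (C 1 - B 1) * hs0 - (C 0 - B 0) * hs1 +
        (C 1 - B 1) * hp0 - (C 0 - B 0) * hp1
    have hc2sq : 0 < c2^2 := by positivity
    have hlc : (1 - t) * (c1 * c2) = -(t * c2^2) := by linear_combination c2 * hlin
    by_contra hcon; push_neg at hcon
    have := mul_nonneg (sub_pos.mpr ht.2).le hcon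
    linarith [mul_pos ht.1 hc2sq]
  -- norms positive
  have hPB : 0 < ‖B - A‖ := by
    rw [norm_pos_iff]; exact sub_ne_zero.mpr (Ne.symm hAB)
  have hPC : 0 < ‖C - A‖ := by
    rw [norm_pos_iff]; exact sub_ne_zero.mpr (Ne.symm hAC)
  have hSB : 0 < ‖B - D‖ := by
    rw [norm_pos_iff]; exact sub_ne_zero.mpr hBD
  have hSC : 0 < ‖C - D‖ := by
    rw [norm_pos_iff]; exact sub_ne_zero.mpr hCD
  -- Lagrange identities
  have hP2 : (‖B - A‖ * ‖C - A‖)^2 = (⟪B - A, C - A⟫ : ℝ)^2 + c1^2 := by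
    rw [mul_pow, hnorm2, hnorm2, hinner, hc1def]
    simp only [hsub]; ring
  have hS2 : (‖B - D‖ * ‖C - D‖)^2 = (⟪B - D, C - D⟫ : ℝ)^2 + c2^2 := by
    rw [mul_pow, hnorm2, hnorm2, hinner, hc2def]
    simp only [hsub]; ring
  -- the power identity
  have hid : c2 * ((A 0 - O 0)^2 + (A 1 - O 1)^2 - r^2) =
      (⟪B - A, C - A⟫ : ℝ) * c2 - c1 * (⟪B - D, C - D⟫ : ℝ) := by
    rw [hinner, hinner, hc1def, hc2def]
    simp only [hsub]
    linear_combination ((C 0 - A 0)*(D 1 - A 1) - (C 1 - A 1)*(D 0 - A 0)) * eB +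
      ((D 0 - A 0)*(B 1 - A 1) - (D 1 - A 1)*(B 0 - A 0)) * eC +
      ((B 0 - A 0)*(C 1 - A 1) - (B 1 - A 1)*(C 0 - A 0)) * eD
  -- assemble
  have hL : dist A O < r ↔ (A 0 - O 0)^2 + (A 1 - O 1)^2 - r^2 < 0 := by
    constructor
    · intro h
      have h2 : dist A O ^ 2 < r ^ 2 :=
        pow_lt_pow_left₀ h dist_nonneg two_ne_zero
      rw [hdist2] at h2; linarith
    · intro h
      have h2 : dist A O ^ 2 < r ^ 2 := by rw [hdist2]; linarith
      exact lt_of_pow_lt_pow_left₀ 2 hr0 h2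
  rw [hL]
  exact key_ineq (⟪B - A, C - A⟫ : ℝ) (⟪B - D, C - D⟫ : ℝ)
    (‖B - A‖ * ‖C - A‖) (‖B - D‖ * ‖C - D‖) c1 c2 _
    (mul_pos hPB hPC) (mul_pos hSB hSC) hP2 hS2 hcc hid
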